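/- Let π be a picking sequence on n agents and m items such that every prefix of π satisfies lower quota, i.e., for every prefix of length k and every agent i, the number t_i of agent i's picks in the prefix satisfies t_i ≥ ⌊(w_i · k) / Σ_{i'∈N} w_{i'}⌋. Then π satisfies weighted proportionality up to one item (WPROP1): for every profile of additive utilities, the allocation it produces is WPROP1. -/

import Mathlib

open Finset

/-- The favorite item of an agent with item-utility function `u` among a remaining
set `R` of items: a highest-valued item, ties broken in favor of the lower-numbered item. -/
noncomputable def favorite {m : ℕ} (u : Fin m → ℝ) (R : Finset (Fin m)) : Option (Fin m) :=
  if h : (R.filter fun j => ∀ j' ∈ R, u j' ≤ u j).Nonempty then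
    some ((R.filter fun j => ∀ j' ∈ R, u j' ≤ u j).min' h)
  else none

/-- One step of the picking process: agent `a` picks her favorite remaining item. -/
noncomputable def pickStep {n m : ℕ} (u : Fin n → Fin m → ℝ)
    (st : Finset (Fin m) × (Fin n → Finset (Fin m))) (a : Fin n) :
    Finset (Fin m) × (Fin n → Finset (Fin m)) :=
  match favorite (u a) st.1 with
  | none => st
  | some j => (st.1.erase j, Function.update st.2 a (insert j (st.2 a)))

/-- The allocation produced by letting agents pick their favorite remaining items
in the order given by the picking sequence `π`. -/
noncomputable def allocate {n m : ℕ} (u : Fin n → Fin m → ℝ) (π : List (Fin n)) :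
    Fin n → Finset (Fin m) :=
  (π.foldl (pickStep u) (Finset.univ, fun _ => ∅)).2

/-- Weighted proportionality up to one item. -/
def isWPROP1 {n m : ℕ} (w : Fin n → ℝ) (u : Fin n → Fin m → ℝ)
    (M : Fin n → Finset (Fin m)) : Prop :=
  ∀ i : Fin n, ∃ B ⊆ Finset.univ \ M i, B.card ≤ 1 ∧
    w i / (∑ i', w i') * (∑ x, u i x) - (∑ x ∈ B, u i x) ≤ ∑ x ∈ M i, u i x

/-- max of `u` over `R`, at least `0`. -/
noncomputable def maxval {m : ℕ} (u : Fin m → ℝ) (R : Finset (Fin m)) : ℝ :=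
  (insert (0:ℝ) (R.image u)).max' (insert_nonempty _ _)

lemma maxval_nonneg {m : ℕ} (u : Fin m → ℝ) (R : Finset (Fin m)) : 0 ≤ maxval u R :=
  le_max' _ _ (mem_insert_self _ _)

lemma le_maxval {m : ℕ} (u : Fin m → ℝ) {R : Finset (Fin m)} {x : Fin m} (hx : x ∈ R) :
    u x ≤ maxval u R :=
  le_max' _ _ (mem_insert_of_mem (mem_image_of_mem _ hx))

lemma maxval_le {m : ℕ} (u : Fin m → ℝ) {R : Finset (Fin m)} {b : ℝ} (h0 : 0 ≤ b)
    (h : ∀ x ∈ R, u x ≤ b) : maxval u R ≤ b := by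
  refine max'_le _ _ _ ?_
  intro y hy
  rcases mem_insert.1 hy with rfl | hy
  · exact h0
  · obtain ⟨x, hx, rfl⟩ := mem_image.1 hy
    exact h x hx

lemma maxval_mono {m : ℕ} (u : Fin m → ℝ) {R S : Finset (Fin m)} (h : R ⊆ S) :
    maxval u R ≤ maxval u S :=
  maxval_le u (maxval_nonneg u S) fun x hx => le_maxval u (h hx)

lemma maxval_empty {m : ℕ} (u : Fin m → ℝ) : maxval u (∅ : Finset (Fin m)) = 0 := by
  simp [maxval]

lemma favorite_spec {m : ℕ} (u : Fin m → ℝ) (R : Finset (Fin m)) (hR : R.Nonempty) :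
    ∃ j, favorite u R = some j ∧ j ∈ R ∧ ∀ j' ∈ R, u j' ≤ u j := by
  obtain ⟨b, hb, hmax⟩ := R.exists_max_image u hR
  have hne : (R.filter fun j => ∀ j' ∈ R, u j' ≤ u j).Nonempty :=
    ⟨b, mem_filter.2 ⟨hb, hmax⟩⟩
  have hmem := min'_mem _ hne
  rw [mem_filter] at hmem
  exact ⟨_, by simp [favorite, hne], hmem.1, hmem.2⟩

/-- state after `k` picks -/
noncomputable def st {n m : ℕ} (u : Fin n → Fin m → ℝ) (π : List (Fin n)) (k : ℕ) :
    Finset (Fin m) × (Fin n → Finset (Fin m)) :=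
  (π.take k).foldl (pickStep u) (Finset.univ, fun _ => ∅)

lemma st_succ {n m : ℕ} (u : Fin n → Fin m → ℝ) (π : List (Fin n)) {k : ℕ}
    (hk : k < π.length) :
    st u π (k+1) = pickStep u (st u π k) π[k] := by
  rw [st, st, List.take_succ, List.getElem?_eq_getElem hk, Option.toList_some,
    List.foldl_append, List.foldl_cons, List.foldl_nil]

lemma st_step {n m : ℕ} (u : Fin n → Fin m → ℝ) (π : List (Fin n)) {k : ℕ}
    (hk : k < π.length) (hne : (st u π k).1.Nonempty) :
    ∃ j ∈ (st u π k).1, (∀ j' ∈ (st u π k).1, u π[k] j' ≤ u π[k] j) ∧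
      st u π (k+1) = ((st u π k).1.erase j,
        Function.update (st u π k).2 π[k] (insert j ((st u π k).2 π[k]))) := by
  obtain ⟨j, hfav, hjR, hjmax⟩ := favorite_spec (u π[k]) _ hne
  refine ⟨j, hjR, hjmax, ?_⟩
  rw [st_succ u π hk, pickStep, hfav]

lemma st_card {n m : ℕ} (u : Fin n → Fin m → ℝ) (π : List (Fin n)) (hlen : π.length = m) :
    ∀ k ≤ m, (st u π k).1.card = m - k := by
  intro k
  induction k with
  | zero => intro _; simp [st]
  | succ k ih =>
    intro hk
    have hk' : k < π.length := by omega
    have hcard := ih (by omega)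
    have hne : (st u π k).1.Nonempty := by
      rw [← card_pos, hcard]; omega
    obtain ⟨j, hjR, _, heq⟩ := st_step u π hk' hne
    rw [heq]
    simp only [card_erase_of_mem hjR, hcard]
    omega

lemma st_nonempty {n m : ℕ} (u : Fin n → Fin m → ℝ) (π : List (Fin n)) (hlen : π.length = m)
    {k : ℕ} (hk : k < m) : (st u π k).1.Nonempty := by
  rw [← card_pos, st_card u π hlen k (le_of_lt hk)]; omega

/-- Structural invariant: each bundle is disjoint from the remaining set, and bundles
are pairwise disjoint. -/
lemma st_disj {n m : ℕ} (u : Fin n → Fin m → ℝ) (π : List (Fin n)) (hlen : π.length = m) :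
    ∀ k ≤ m, (∀ a, ∀ x ∈ (st u π k).2 a, x ∉ (st u π k).1) ∧
      (∀ a b, a ≠ b → ∀ x ∈ (st u π k).2 a, x ∉ (st u π k).2 b) := by
  intro k
  induction k with
  | zero => intro _; simp [st]
  | succ k ih =>
    intro hk
    have hk' : k < π.length := by omega
    obtain ⟨ih1, ih2⟩ := ih (by omega)
    obtain ⟨j, hjR, _, heq⟩ := st_step u π hk' (st_nonempty u π hlen (by omega : k < m))
    rw [heq]
    constructor
    · intro a x hx hx'
      simp only at hx hx'
      have hxR : x ∈ (st u π k).1 := mem_of_mem_erase hx'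
      by_cases ha : a = π[k]
      · subst ha
        rw [Function.update_self] at hx
        rcases mem_insert.1 hx with rfl | hx
        · exact (notMem_erase _ _) hx'
        · exact ih1 _ x hx hxR
      · rw [Function.update_of_ne ha] at hx
        exact ih1 _ x hx hxR
    · intro a b hab x hxa hxb
      simp only at hxa hxb
      by_cases ha : a = π[k]
      · subst ha
        rw [Function.update_self] at hxa
        rw [Function.update_of_ne (Ne.symm hab)] at hxb
        rcases mem_insert.1 hxa with rfl | hxa
        · exact ih1 _ x hxb hjR
        · exact ih2 _ _ hab x hxa hxb
      · rw [Function.update_of_ne ha] at hxa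
        by_cases hb : b = π[k]
        · subst hb
          rw [Function.update_self] at hxb
          rcases mem_insert.1 hxb with rfl | hxb
          · exact ih1 _ x hxa hjR
          · exact ih2 _ _ hab x hxa hxb
        · rw [Function.update_of_ne hb] at hxb
          exact ih2 _ _ hab x hxa hxb

lemma st_mono_step {n m : ℕ} (u : Fin n → Fin m → ℝ) (π : List (Fin n)) (a : Fin n)
    (k : ℕ) : (st u π k).2 a ⊆ (st u π (k+1)).2 a := by
  by_cases hk : k < π.length
  · by_cases hne : (st u π k).1.Nonempty
    · obtain ⟨j, _, _, heq⟩ := st_step u π hk hne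
      rw [heq]
      by_cases ha : a = π[k]
      · subst ha; simp only [Function.update_self]; exact subset_insert _ _
      · simp only [Function.update_of_ne ha]; exact Subset.refl _
    · rw [st_succ u π hk, pickStep]
      rw [not_nonempty_iff_eq_empty] at hne
      rw [hne]
      have : favorite (u π[k]) (∅ : Finset (Fin m)) = none := by simp [favorite]
      rw [this]
  · have : π.take (k+1) = π.take k := by
      rw [List.take_of_length_le (by omega), List.take_of_length_le (by omega)]
    simp only [st, this]
    exact Subset.refl _

lemma st_mono {n m : ℕ} (u : Fin n → Fin m → ℝ) (π : List (Fin n)) (a : Fin n)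
    {k k' : ℕ} (hk : k ≤ k') : (st u π k).2 a ⊆ (st u π k').2 a := by
  induction k', hk using Nat.le_induction with
  | base => exact Subset.refl _
  | succ k' hk ih => exact ih.trans (st_mono_step u π a k')

lemma main_inv {n m : ℕ} (w : Fin n → ℝ) (hw : ∀ i, 0 < w i)
    (π : List (Fin n)) (hlen : π.length = m)
    (hquota : ∀ (k : ℕ), k ≤ m → ∀ i : Fin n,
      ⌊w i * k / ∑ i', w i'⌋ ≤ ((π.take k).count i : ℤ))
    (u : Fin n → Fin m → ℝ) (hu : ∀ i j, 0 ≤ u i j) (i : Fin n) :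
    ∀ k ≤ m,
      w i * (∑ x ∈ univ \ (st u π k).1, u i x)
        + ((∑ i', w i') * (((π.take k).count i : ℝ) + 1) - w i * k)
          * min (maxval (u i) (st u π k).1)
              (maxval (u i) (univ \ (st u π m).2 i))
      ≤ (∑ i', w i') * (∑ x ∈ (st u π k).2 i, u i x)
        + (∑ i', w i') * maxval (u i) (univ \ (st u π m).2 i) := by
  set W : ℝ := ∑ i', w i' with hW
  have hWpos : 0 < W := Finset.sum_pos (fun j _ => hw j) ⟨i, mem_univ i⟩
  have hWi : w i ≤ W := Finset.single_le_sum (fun j _ => (hw j).le) (mem_univ i)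
  set ν : ℝ := maxval (u i) (univ \ (st u π m).2 i) with hν
  have hν0 : 0 ≤ ν := maxval_nonneg _ _
  -- real-valued quota bound
  have quota : ∀ k ≤ m, w i * k < W * (((π.take k).count i : ℝ) + 1) := by
    intro k hk
    have h1 := hquota k hk i
    have h2 : w i * k / W < ((π.take k).count i : ℝ) + 1 := by
      calc w i * k / W < (⌊w i * k / W⌋ : ℝ) + 1 := Int.lt_floor_add_one _
        _ ≤ ((π.take k).count i : ℝ) + 1 := by
            have : ((⌊w i * k / W⌋ : ℤ) : ℝ) ≤ (((π.take k).count i : ℤ) : ℝ) :=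
              Int.cast_le.2 h1
            push_cast at this ⊢
            linarith
    rw [div_lt_iff₀ hWpos] at h2
    linarith
  intro k
  induction k with
  | zero =>
    intro _
    simp only [st, List.take_zero, List.foldl_nil, List.count_nil, Nat.cast_zero,
      sdiff_self, Finset.bot_eq_empty, sum_empty, mul_zero, zero_add, add_zero]
    have hmin : min (maxval (u i) univ) ν ≤ ν := min_le_right _ _
    nlinarith [mul_le_mul_of_nonneg_left hmin hWpos.le]
  | succ k ih =>
    intro hk
    have hkm : k < m := by omega
    have hk' : k < π.length := by omega
    have hne : (st u π k).1.Nonempty := st_nonempty u π hlen hkm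
    obtain ⟨j, hjR, hjmax, heq⟩ := st_step u π hk' hne
    have IH := ih (by omega)
    -- abbreviations
    set R := (st u π k).1 with hR
    set Mi := (st u π k).2 i with hMi
    set t : ℝ := ((π.take k).count i : ℝ) with ht
    set μ := maxval (u i) R with hμ
    set μ' := maxval (u i) (R.erase j) with hμ'
    have hμ'μ : μ' ≤ μ := maxval_mono _ (erase_subset _ _)
    have hμ0 : 0 ≤ μ := maxval_nonneg _ _
    have hμ'0 : 0 ≤ μ' := maxval_nonneg _ _
    have hjμ : u i j ≤ μ := le_maxval _ hjR
    have huj : 0 ≤ u i j := hu i j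
    -- sum over univ \ R.erase j
    have hjdiff : j ∉ univ \ R := by simp [hjR]
    have hsdiff : (univ \ R.erase j) = insert j (univ \ R) :=
      sdiff_erase (mem_univ j)
    have hsum1 : (∑ x ∈ univ \ R.erase j, u i x) = u i j + ∑ x ∈ univ \ R, u i x := by
      rw [hsdiff, sum_insert hjdiff]
    -- count in take (k+1)
    have hcount : (π.take (k+1)).count i
        = (π.take k).count i + (if π[k] = i then 1 else 0) := by
      rw [List.take_succ, List.getElem?_eq_getElem hk', Option.toList_some,
        List.count_append]
      by_cases h : π[k] = i <;> simp [h, Ne.symm, eq_comm] <;> omega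
    have hquota1 : w i * ((k:ℝ)+1) < W * (((π.take (k+1)).count i : ℝ) + 1) := by
      have := quota (k+1) hk; push_cast at this; linarith
    rw [heq]
    by_cases ha : π[k] = i
    · -- agent i picks j
      have hui : u i j = μ := by
        have h1 : μ ≤ u i j := maxval_le _ huj (by rw [ha] at hjmax; exact hjmax)
        linarith
      have hcnt : ((π.take (k+1)).count i : ℝ) = t + 1 := by
        rw [hcount, ha]; push_cast; simp; exact ht.symm
      have hMnew : Function.update (st u π k).2 π[k] (insert j ((st u π k).2 π[k])) i
          = insert j Mi := by rw [ha, Function.update_self]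
      have hjMi : j ∉ Mi := fun hmem => (st_disj u π hlen k hkm.le).1 i j hmem hjR
      have hsum2 : (∑ x ∈ insert j Mi, u i x) = u i j + ∑ x ∈ Mi, u i x := sum_insert hjMi
      simp only [hMnew]
      rw [hsum1, hsum2, hcnt, hui]
      have hC : 0 ≤ W * ((t + 1) + 1) - w i * (k+1) := by
        rw [← hcnt]; linarith [hquota1]
      have hminle : min μ' ν ≤ min μ ν := min_le_min hμ'μ (le_refl ν)
      have hminμ : min μ ν ≤ μ := min_le_left _ _
      have hmin0 : 0 ≤ min μ' ν := le_min hμ'0 hν0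
      push_cast
      nlinarith [mul_le_mul_of_nonneg_left hminle hC,
        mul_le_mul_of_nonneg_left hminμ (by linarith : (0:ℝ) ≤ W - w i)]
    · -- another agent picks j
      have hcnt : ((π.take (k+1)).count i : ℝ) = t := by
        rw [hcount, if_neg ha]; push_cast; simp; exact ht.symm
      have hMnew : Function.update (st u π k).2 π[k] (insert j ((st u π k).2 π[k])) i
          = Mi := Function.update_of_ne (by exact fun h => ha (by rw [h])) _ _
      -- j goes to agent π[k]'s final bundle, hence not in i's final bundle
      have hjfin : j ∈ (st u π m).2 π[k] := by
        have h1 : j ∈ (st u π (k+1)).2 π[k] := by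
          rw [heq]; simp only [Function.update_self]; exact mem_insert_self _ _
        exact st_mono u π π[k] (by omega : k+1 ≤ m) h1
      have hjnotMi : j ∈ univ \ (st u π m).2 i := by
        rw [mem_sdiff]
        refine ⟨mem_univ _, fun hmem => ?_⟩
        exact (st_disj u π hlen m le_rfl).2 _ _ ha j hjfin hmem
      have hjν : u i j ≤ ν := le_maxval _ hjnotMi
      have hjmin : u i j ≤ min μ ν := le_min hjμ hjν
      simp only [hMnew]
      rw [hsum1, hcnt]
      have hC : 0 ≤ W * (t + 1) - w i * (k+1) := by
        rw [← hcnt]; linarith [hquota1]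
      have hminle : min μ' ν ≤ min μ ν := min_le_min hμ'μ (le_refl ν)
      push_cast
      nlinarith [mul_le_mul_of_nonneg_left hminle hC,
        mul_le_mul_of_nonneg_left hjmin (hw i).le]

/-- If every prefix of a picking sequence `π` satisfies lower quota
(for every prefix of length `k` and every agent `i`, the number of agent `i`'s picks
in the prefix is at least `⌊w_i · k / Σ_{i'} w_{i'}⌋`), then `π` satisfies WPROP1. -/
theorem lower_quota_implies_WPROP1
    (n m : ℕ) (w : Fin n → ℝ) (hw : ∀ i, 0 < w i)
    (π : List (Fin n)) (hlen : π.length = m)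
    (hquota : ∀ (k : ℕ), k ≤ m → ∀ i : Fin n,
      ⌊w i * k / ∑ i', w i'⌋ ≤ ((π.take k).count i : ℤ)) :
    ∀ u : Fin n → Fin m → ℝ, (∀ i j, 0 ≤ u i j) →
      isWPROP1 w u (allocate u π) := by
  intro u hu i
  have htake : π.take m = π := by rw [← hlen]; exact List.take_length
  have hst : allocate u π = (st u π m).2 := by rw [allocate, st, htake]
  set W : ℝ := ∑ i', w i' with hW
  have hWpos : 0 < W := Finset.sum_pos (fun j _ => hw j) ⟨i, mem_univ i⟩
  have hWi : w i ≤ W := Finset.single_le_sum (fun j _ => (hw j).le) (mem_univ i)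
  set M := (st u π m).2 i with hM
  set ν : ℝ := maxval (u i) (univ \ M) with hν
  have hν0 : 0 ≤ ν := maxval_nonneg _ _
  have hRm : (st u π m).1 = ∅ := by
    have := st_card u π hlen m le_rfl
    simp only [Nat.sub_self] at this
    exact card_eq_zero.1 this
  have key := main_inv w hw π hlen hquota u hu i m le_rfl
  rw [hRm] at key
  simp only [maxval_empty, sdiff_empty] at key
  rw [min_comm] at key
  rw [min_eq_right hν0] at key
  simp only [mul_zero, add_zero, ← hW, ← hM, ← hν] at key
  -- key : w i * (∑ x ∈ univ, u i x) ≤ W * (∑ x ∈ M, u i x) + W * ν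
  have hSnn : 0 ≤ ∑ x : Fin m, u i x := Finset.sum_nonneg fun x _ => hu i x
  have hMnn : 0 ≤ ∑ x ∈ M, u i x := Finset.sum_nonneg fun x _ => hu i x
  rw [hst, ← hM]
  rcases (univ \ M).eq_empty_or_nonempty with hemp | hne
  · refine ⟨∅, empty_subset _, by simp, ?_⟩
    have hMuniv : M = univ := by
      have h1 : univ ⊆ M := fun x hx => by
        by_contra hxM
        exact (by simp [hemp] : x ∉ univ \ M) (mem_sdiff.2 ⟨hx, hxM⟩)
      exact Subset.antisymm (subset_univ M) h1
    rw [hMuniv]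
    simp only [sum_empty, sub_zero]
    calc w i / W * ∑ x : Fin m, u i x ≤ 1 * ∑ x : Fin m, u i x := by
          apply mul_le_mul_of_nonneg_right _ hSnn
          rw [div_le_one hWpos]; exact hWi
      _ = ∑ x : Fin m, u i x := one_mul _
  · obtain ⟨b, hb, hbmax⟩ := (univ \ M).exists_max_image (u i) hne
    refine ⟨{b}, singleton_subset_iff.2 hb, by simp, ?_⟩
    have hνb : ν ≤ u i b := maxval_le _ (hu i b) hbmax
    rw [sum_singleton]
    have h2 : w i / W * ∑ x : Fin m, u i x ≤ (∑ x ∈ M, u i x) + u i b := by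
      rw [div_mul_eq_mul_div, div_le_iff₀ hWpos]
      have : W * ν ≤ W * u i b := mul_le_mul_of_nonneg_left hνb hWpos.le
      nlinarith
    linarith
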